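/- For every integer h ≥ 2, the set of pseudo-Frobenius numbers PF(Γ_{A_h}) of the Arslan semigroup Γ_{A_h} has exactly 2h−1 elements (i.e., the type of Γ_{A_h} is 2h−1). -/

import Mathlib

/-- Representation predicate equivalent to membership in the Arslan semigroup. -/
def repA (h x : ℕ) : Prop :=
  ∃ k t c : ℕ, t ≤ k ∧ c ≤ k ∧ x = k * (h * (h + 1)) + (h + 1) * t + c

lemma repA_iff (h x : ℕ) :
    (∃ z1 z2 z3 z4 : ℕ, x = z1 * (h * (h + 1)) + z2 * (h * (h + 1) + 1) +
      z3 * ((h + 1) ^ 2) + z4 * ((h + 1) ^ 2 + 1)) ↔ repA h x := by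
  constructor
  · rintro ⟨z1, z2, z3, z4, rfl⟩
    exact ⟨z1 + z2 + z3 + z4, z3 + z4, z2 + z4, by omega, by omega, by ring⟩
  · rintro ⟨k, t, c, htk, hck, rfl⟩
    rcases le_or_gt c t with hct | hct
    · obtain ⟨d, rfl⟩ := Nat.exists_eq_add_of_le hct
      obtain ⟨e, rfl⟩ := Nat.exists_eq_add_of_le htk
      exact ⟨e, 0, d, c, by ring⟩
    · obtain ⟨d, rfl⟩ := Nat.exists_eq_add_of_le hct.le
      obtain ⟨e, rfl⟩ := Nat.exists_eq_add_of_le hck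
      exact ⟨e, d, 0, t, by ring⟩

lemma repA_add {h x y : ℕ} (hx : repA h x) (hy : repA h y) : repA h (x + y) := by
  obtain ⟨k, t, c, h1, h2, rfl⟩ := hx
  obtain ⟨k', t', c', h1', h2', rfl⟩ := hy
  exact ⟨k + k', t + t', c + c', by omega, by omega, by ring⟩

lemma repA_big {h x : ℕ} (hh : 2 ≤ h) (hx : h * (h * (h + 1)) ≤ x) : repA h x := by
  have hn : 0 < h * (h + 1) := Nat.mul_pos (by omega) (by omega)
  have hd := Nat.div_add_mod x (h * (h + 1))
  have hm : x % (h * (h + 1)) < h * (h + 1) := Nat.mod_lt _ hn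
  have hd2 := Nat.div_add_mod (x % (h * (h + 1))) (h + 1)
  have hm2 : x % (h * (h + 1)) % (h + 1) < h + 1 := Nat.mod_lt _ (by omega)
  set k := x / (h * (h + 1)) with hk
  set r := x % (h * (h + 1)) with hr
  set t := r / (h + 1) with ht
  set s := r % (h + 1) with hs
  have htlt : t < h := by
    rw [ht]
    rw [Nat.div_lt_iff_lt_mul (by omega : 0 < h + 1)]
    calc r < h * (h + 1) := hm
    _ = h * (h + 1) := rfl
  have hkh : h ≤ k := by
    by_contra hcon
    push_neg at hcon
    have : (k + 1) * (h * (h + 1)) ≤ h * (h * (h + 1)) := Nat.mul_le_mul_right _ (by omega)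
    nlinarith [hd, hm]
  exact ⟨k, t, s, by omega, by omega, by nlinarith [hd, hd2]⟩

lemma repA_lt_iff {h k q s : ℕ} (hh : 2 ≤ h) (hk : k + 1 ≤ h) (hq : q + 1 ≤ h) (hs : s ≤ h) :
    repA h (k * (h * (h + 1)) + (h + 1) * q + s) ↔ (q ≤ k ∧ s ≤ k) := by
  constructor
  · rintro ⟨k', t, c, htk, hck, heq⟩
    have hrs : (h + 1) * q + s < h * (h + 1) := by
      have := Nat.mul_le_mul_left (h + 1) hq
      nlinarith
    have hk'le : k' ≤ k := by
      by_contra hcon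
      push_neg at hcon
      have hA : (k + 1) * (h * (h + 1)) ≤ k' * (h * (h + 1)) :=
        Nat.mul_le_mul_right _ (by omega)
      nlinarith [heq]
    have hkle : k ≤ k' := by
      by_contra hcon
      push_neg at hcon
      have hA : (k' + 1) * (h * (h + 1)) ≤ k * (h * (h + 1)) :=
        Nat.mul_le_mul_right _ (by omega)
      have hB : (h + 2) * (k' + 2) ≤ (h + 2) * h := Nat.mul_le_mul_left _ (by omega)
      have hC : (h + 1) * t ≤ (h + 1) * k' := Nat.mul_le_mul_left _ htk
      nlinarith [heq]
    have hk'k : k' = k := le_antisymm hk'le hkle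
    subst hk'k
    have hcanc : (h + 1) * t + c = (h + 1) * q + s := by linarith [heq]
    have htq : t = q := by
      rcases lt_trichotomy t q with H | H | H
      · exfalso
        have : (h + 1) * (t + 1) ≤ (h + 1) * q := Nat.mul_le_mul_left _ (by omega)
        nlinarith
      · exact H
      · exfalso
        have : (h + 1) * (q + 1) ≤ (h + 1) * t := Nat.mul_le_mul_left _ (by omega)
        nlinarith
    subst htq
    have hcs : c = s := by linarith
    exact ⟨htk, by omega⟩
  · rintro ⟨h1, h2⟩
    exact ⟨k, q, s, h1, h2, rfl⟩

lemma repA_small {h y : ℕ} (hy : repA h y) : y = 0 ∨ h * (h + 1) ≤ y := by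
  obtain ⟨k, t, c, h1, h2, rfl⟩ := hy
  rcases Nat.eq_zero_or_pos k with hk | hk
  · left
    obtain rfl : t = 0 := by omega
    obtain rfl : c = 0 := by omega
    subst hk; simp
  · right
    have : 1 * (h * (h + 1)) ≤ k * (h * (h + 1)) := Nat.mul_le_mul_right _ hk
    nlinarith

lemma not_repA_one {h : ℕ} (hh : 2 ≤ h) : ¬ repA h 1 := by
  intro hr
  rcases repA_small hr with h0 | h0
  · omega
  · nlinarith

/-- decomposition of any x < h·n into block coordinates -/
lemma decompA {h x : ℕ} (hh : 2 ≤ h) (hx : x < h * (h * (h + 1))) :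
    ∃ k q s : ℕ, k + 1 ≤ h ∧ q + 1 ≤ h ∧ s ≤ h ∧
      x = k * (h * (h + 1)) + (h + 1) * q + s := by
  have hn : 0 < h * (h + 1) := Nat.mul_pos (by omega) (by omega)
  have hd := Nat.div_add_mod x (h * (h + 1))
  have hm : x % (h * (h + 1)) < h * (h + 1) := Nat.mod_lt _ hn
  have hd2 := Nat.div_add_mod (x % (h * (h + 1))) (h + 1)
  have hm2 : x % (h * (h + 1)) % (h + 1) < h + 1 := Nat.mod_lt _ (by omega)
  refine ⟨x / (h * (h + 1)), x % (h * (h + 1)) / (h + 1), x % (h * (h + 1)) % (h + 1),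
    ?_, ?_, by omega, by nlinarith⟩
  · have : x / (h * (h + 1)) < h := by
      rw [Nat.div_lt_iff_lt_mul hn]
      nlinarith
    omega
  · have : x % (h * (h + 1)) / (h + 1) < h := by
      rw [Nat.div_lt_iff_lt_mul (by omega : 0 < h + 1)]
      nlinarith
    omega

/-- the key structure lemma: a pseudo-Frobenius element has one of two shapes -/
lemma keyA {h x : ℕ} (hh : 2 ≤ h) (hx0 : ¬ repA h x)
    (hx1 : repA h (x + h * (h + 1)))
    (hx2 : repA h (x + (h * (h + 1) + 1)))
    (hx3 : repA h (x + (h + 1) ^ 2)) :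
    (∃ k q s : ℕ, k + 2 = h ∧ q + 1 = h ∧ s ≤ k ∧
        x = k * (h * (h + 1)) + (h + 1) * q + s) ∨
    (∃ k q : ℕ, k + 1 = h ∧ q + 1 ≤ h ∧
        x = k * (h * (h + 1)) + (h + 1) * q + h) := by
  have hxlt : x < h * (h * (h + 1)) := by
    by_contra hcon
    exact hx0 (repA_big hh (by omega))
  obtain ⟨k, q, s, hk, hq, hs, hxeq⟩ := decompA hh hxlt
  have hgap : ¬ (q ≤ k ∧ s ≤ k) := fun hc => hx0 (by
    rw [hxeq]; exact (repA_lt_iff hh hk hq hs).mpr hc)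
  by_cases hk2 : k + 2 ≤ h
  · -- use hx1: q ≤ k+1, s ≤ k+1
    have e1 : x + h * (h + 1) = (k + 1) * (h * (h + 1)) + (h + 1) * q + s := by
      rw [hxeq]; ring
    rw [e1] at hx1
    have h1' := (repA_lt_iff hh (by omega) hq hs).mp hx1
    have hsk : s ≤ k := by
      by_contra hscon
      have hse : s = k + 1 := by omega
      have e2 : x + (h * (h + 1) + 1) = (k + 1) * (h * (h + 1)) + (h + 1) * q + (s + 1) := by
        rw [hxeq]; ring
      rw [e2] at hx2
      have h2' := (repA_lt_iff hh (by omega) hq (by omega)).mp hx2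
      omega
    have hqk : q = k + 1 := by omega
    have hqh : q + 1 = h := by
      by_contra hqcon
      have e3 : x + (h + 1) ^ 2 = (k + 1) * (h * (h + 1)) + (h + 1) * (q + 1) + s := by
        rw [hxeq]; ring
      rw [e3] at hx3
      have h3' := (repA_lt_iff hh (by omega) (by omega) hs).mp hx3
      omega
    left
    exact ⟨k, q, s, by omega, hqh, hsk, hxeq⟩
  · -- k + 1 = h, so s = h
    have hkh : k + 1 = h := by omega
    have hsh : s = h := by omega
    right
    exact ⟨k, q, by omega, by omega, by rw [hxeq, hsh]⟩

/-- sufficiency: closure under adding semigroup elements follows from generators -/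
lemma pfA {h x : ℕ}
    (h1 : repA h (x + h * (h + 1)))
    (h2 : repA h (x + (h * (h + 1) + 1)))
    (h3 : repA h (x + (h + 1) ^ 2))
    (h4 : repA h (x + ((h + 1) ^ 2 + 1)))
    {s : ℕ} (hs : repA h s) (hpos : 0 < s) : repA h (x + s) := by
  obtain ⟨z1, z2, z3, z4, rfl⟩ := (repA_iff h s).mpr hs
  rcases Nat.eq_zero_or_pos z1 with hz | hz
  · rcases Nat.eq_zero_or_pos z2 with hz2 | hz2
    · rcases Nat.eq_zero_or_pos z3 with hz3 | hz3
      · rcases Nat.eq_zero_or_pos z4 with hz4 | hz4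
        · exfalso; subst hz; subst hz2; subst hz3; subst hz4; simp at hpos
        · obtain ⟨w, rfl⟩ : ∃ w, z4 = w + 1 := ⟨z4 - 1, by omega⟩
          have e : x + (z1 * (h * (h + 1)) + z2 * (h * (h + 1) + 1) + z3 * ((h + 1) ^ 2)
              + (w + 1) * ((h + 1) ^ 2 + 1))
              = (x + ((h + 1) ^ 2 + 1)) + (z1 * (h * (h + 1)) + z2 * (h * (h + 1) + 1)
              + z3 * ((h + 1) ^ 2) + w * ((h + 1) ^ 2 + 1)) := by ring
          rw [e]
          exact repA_add h4 ((repA_iff h _).mp ⟨z1, z2, z3, w, rfl⟩)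
      · obtain ⟨w, rfl⟩ : ∃ w, z3 = w + 1 := ⟨z3 - 1, by omega⟩
        have e : x + (z1 * (h * (h + 1)) + z2 * (h * (h + 1) + 1) + (w + 1) * ((h + 1) ^ 2)
            + z4 * ((h + 1) ^ 2 + 1))
            = (x + (h + 1) ^ 2) + (z1 * (h * (h + 1)) + z2 * (h * (h + 1) + 1)
            + w * ((h + 1) ^ 2) + z4 * ((h + 1) ^ 2 + 1)) := by ring
        rw [e]
        exact repA_add h3 ((repA_iff h _).mp ⟨z1, z2, w, z4, rfl⟩)
    · obtain ⟨w, rfl⟩ : ∃ w, z2 = w + 1 := ⟨z2 - 1, by omega⟩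
      have e : x + (z1 * (h * (h + 1)) + (w + 1) * (h * (h + 1) + 1) + z3 * ((h + 1) ^ 2)
          + z4 * ((h + 1) ^ 2 + 1))
          = (x + (h * (h + 1) + 1)) + (z1 * (h * (h + 1)) + w * (h * (h + 1) + 1)
          + z3 * ((h + 1) ^ 2) + z4 * ((h + 1) ^ 2 + 1)) := by ring
      rw [e]
      exact repA_add h2 ((repA_iff h _).mp ⟨z1, w, z3, z4, rfl⟩)
  · obtain ⟨w, rfl⟩ : ∃ w, z1 = w + 1 := ⟨z1 - 1, by omega⟩
    have e : x + ((w + 1) * (h * (h + 1)) + z2 * (h * (h + 1) + 1) + z3 * ((h + 1) ^ 2)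
        + z4 * ((h + 1) ^ 2 + 1))
        = (x + h * (h + 1)) + (w * (h * (h + 1)) + z2 * (h * (h + 1) + 1)
        + z3 * ((h + 1) ^ 2) + z4 * ((h + 1) ^ 2 + 1)) := by ring
    rw [e]
    exact repA_add h1 ((repA_iff h _).mp ⟨w, z2, z3, z4, rfl⟩)
theorem arslan_type (h : ℕ) (hh : 2 ≤ h)
    (a1 a2 a3 a4 : ℕ)
    (ha1 : a1 = h * (h + 1)) (ha2 : a2 = h * (h + 1) + 1)
    (ha3 : a3 = (h + 1) ^ 2) (ha4 : a4 = (h + 1) ^ 2 + 1)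
    (Γ : Set ℕ)
    (hΓ : Γ = {x | ∃ z1 z2 z3 z4 : ℕ, x = z1 * a1 + z2 * a2 + z3 * a3 + z4 * a4}) :
    {x : ℤ | (¬ ∃ y ∈ Γ, x = (y : ℤ)) ∧
        ∀ s ∈ Γ, 0 < s → ∃ y ∈ Γ, x + (s : ℤ) = (y : ℤ)}.ncard = 2 * h - 1 := by
  subst ha1 ha2 ha3 ha4 hΓ
  obtain ⟨m, rfl⟩ : ∃ m, h = m + 2 := ⟨h - 2, by omega⟩
  set h : ℕ := m + 2 with hhdef
  have hh2 : 2 ≤ h := by omega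
  -- membership in Γ is repA
  have hmem : ∀ y : ℕ, (y ∈ {x | ∃ z1 z2 z3 z4 : ℕ, x = z1 * (h * (h + 1)) +
      z2 * (h * (h + 1) + 1) + z3 * ((h + 1) ^ 2) + z4 * ((h + 1) ^ 2 + 1)}) ↔ repA h y := by
    intro y; exact repA_iff h y
  set f : ℕ → ℤ := fun i => if i ≤ m then ((h : ℤ) ^ 3 - 2 * h - 1 + i)
    else ((h : ℤ) ^ 3 + ((h : ℤ) + 1) * ((i : ℤ) - (m + 1))) with hf
  have hset : {x : ℤ | (¬ ∃ y ∈ {x | ∃ z1 z2 z3 z4 : ℕ, x = z1 * (h * (h + 1)) +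
        z2 * (h * (h + 1) + 1) + z3 * ((h + 1) ^ 2) + z4 * ((h + 1) ^ 2 + 1)}, x = (y : ℤ)) ∧
      ∀ s ∈ {x | ∃ z1 z2 z3 z4 : ℕ, x = z1 * (h * (h + 1)) +
        z2 * (h * (h + 1) + 1) + z3 * ((h + 1) ^ 2) + z4 * ((h + 1) ^ 2 + 1)}, 0 < s →
        ∃ y ∈ {x | ∃ z1 z2 z3 z4 : ℕ, x = z1 * (h * (h + 1)) +
        z2 * (h * (h + 1) + 1) + z3 * ((h + 1) ^ 2) + z4 * ((h + 1) ^ 2 + 1)}, x + (s : ℤ) = (y : ℤ)}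
      = ↑((Finset.range (2 * m + 3)).image f) := by
    ext x
    simp only [Set.mem_setOf_eq, Finset.coe_image, Set.mem_image, Finset.mem_coe,
      Finset.mem_range]
    constructor
    · rintro ⟨hnot, hall⟩
      have hnotrep : ∀ y : ℕ, x = (y : ℤ) → ¬ repA h y := by
        intro y hy hr
        exact hnot ⟨y, (hmem y).mpr hr, hy⟩
      have hg1 : repA h (h * (h + 1)) := ⟨1, 0, 0, by omega, by omega, by ring⟩
      have hg2 : repA h (h * (h + 1) + 1) := ⟨1, 0, 1, by omega, by omega, by ring⟩
      have hg3 : repA h ((h + 1) ^ 2) := ⟨1, 1, 0, by omega, by omega, by ring⟩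
      have hg4 : repA h ((h + 1) ^ 2 + 1) := ⟨1, 1, 1, by omega, by omega, by ring⟩
      have hpos1 : 0 < h * (h + 1) := by positivity
      obtain ⟨y1, hy1S, hy1⟩ := hall _ ((hmem _).mpr hg1) hpos1
      have hy1rep : repA h y1 := (hmem _).mp hy1S
      rcases repA_small hy1rep with h0 | h0
      · exfalso
        subst h0
        obtain ⟨y2, hy2S, hy2⟩ := hall _ ((hmem _).mpr hg2) (by omega)
        have : (y2 : ℤ) = 1 := by push_cast at hy1 hy2 ⊢; linarith
        have hy2' : y2 = 1 := by exact_mod_cast this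
        exact not_repA_one hh2 (hy2' ▸ (hmem _).mp hy2S)
      · set X : ℕ := y1 - h * (h + 1) with hX
        have hxX : x = (X : ℤ) := by
          have : (X : ℤ) = (y1 : ℤ) - (h * (h + 1) : ℕ) := by
            rw [hX]; push_cast [Nat.cast_sub h0]; ring
          rw [this]; push_cast at hy1 ⊢; linarith
        have hXrep : ¬ repA h X := hnotrep X hxX
        have getrep : ∀ g : ℕ, repA h g → 0 < g → repA h (X + g) := by
          intro g hg hgpos
          obtain ⟨y, hyS, hy⟩ := hall _ ((hmem _).mpr hg) hgpos
          have : ((X + g : ℕ) : ℤ) = (y : ℤ) := by push_cast; rw [← hxX] at *; linarith [hy]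
          have he : X + g = y := by exact_mod_cast this
          exact he ▸ (hmem _).mp hyS
        have hr1 := getrep _ hg1 hpos1
        have hr2 := getrep _ hg2 (by omega)
        have hr3 := getrep _ hg3 (by positivity)
        rcases keyA hh2 hXrep hr1 hr2 hr3 with ⟨k, q, s, hk, hq, hs, hxe⟩ | ⟨k, q, hk, hq, hxe⟩
        · refine ⟨s, by omega, ?_⟩
          rw [hf]
          simp only [if_pos (show s ≤ m by omega)]
          rw [hxX, hxe]
          have hkm : k = m := by omega
          have hqm : q = m + 1 := by omega
          subst hkm; subst hqm
          push_cast
          rw [hhdef]; push_cast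
          ring
        · refine ⟨m + 1 + q, by omega, ?_⟩
          rw [hf]
          simp only [if_neg (show ¬ m + 1 + q ≤ m by omega)]
          rw [hxX, hxe]
          have hkm : k = m + 1 := by omega
          subst hkm
          push_cast
          rw [hhdef]; push_cast
          ring
    · rintro ⟨i, hi, rfl⟩
      by_cases hib : i ≤ m
      · set X : ℕ := m * (h * (h + 1)) + (h + 1) * (m + 1) + i with hXd
        have hfX : f i = (X : ℤ) := by
          rw [hf]; simp only [if_pos hib]; rw [hXd]; push_cast; rw [hhdef]; push_cast; ring
        have hXnot : ¬ repA h X := by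
          intro hr
          have := (repA_lt_iff hh2 (show m + 1 ≤ h by omega) (show (m + 1) + 1 ≤ h by omega)
            (show i ≤ h by omega)).mp hr
          omega
        have hr1 : repA h (X + h * (h + 1)) :=
          ⟨m + 1, m + 1, i, by omega, by omega, by rw [hXd]; ring⟩
        have hr2 : repA h (X + (h * (h + 1) + 1)) :=
          ⟨m + 1, m + 1, i + 1, by omega, by omega, by rw [hXd]; ring⟩
        have hr3 : repA h (X + (h + 1) ^ 2) :=
          ⟨m + 2, 0, i, by omega, by omega, by rw [hXd]; ring⟩
        have hr4 : repA h (X + ((h + 1) ^ 2 + 1)) :=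
          ⟨m + 2, 0, i + 1, by omega, by omega, by rw [hXd]; ring⟩
        constructor
        · rintro ⟨y, hyS, hy⟩
          rw [hfX] at hy
          have : X = y := by exact_mod_cast hy
          exact hXnot (this ▸ (hmem _).mp hyS)
        · intro s hsS hspos
          refine ⟨X + s, (hmem _).mpr (pfA hr1 hr2 hr3 hr4 ((hmem _).mp hsS) hspos), ?_⟩
          rw [hfX]; push_cast; ring
      · obtain ⟨q, rfl⟩ : ∃ q, i = m + 1 + q := ⟨i - (m + 1), by omega⟩
        have hqle : q ≤ m + 1 := by omega
        set X : ℕ := (m + 1) * (h * (h + 1)) + (h + 1) * q + h with hXd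
        have hfX : f (m + 1 + q) = (X : ℤ) := by
          rw [hf]; simp only [if_neg hib]; rw [hXd]; push_cast; rw [hhdef]; push_cast; ring
        have hXnot : ¬ repA h X := by
          intro hr
          have := (repA_lt_iff hh2 (show (m + 1) + 1 ≤ h by omega)
            (show q + 1 ≤ h by omega) (le_refl h)).mp hr
          omega
        have hbig : ∀ g : ℕ, h * (h + 1) ≤ g → repA h (X + g) := by
          intro g hg
          apply repA_big hh2
          rw [hXd]
          nlinarith
        have hr1 : repA h (X + h * (h + 1)) := hbig _ (le_refl _)
        have hr2 : repA h (X + (h * (h + 1) + 1)) := hbig _ (by omega)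
        have hr3 : repA h (X + (h + 1) ^ 2) := hbig _ (by nlinarith)
        have hr4 : repA h (X + ((h + 1) ^ 2 + 1)) := hbig _ (by nlinarith)
        constructor
        · rintro ⟨y, hyS, hy⟩
          rw [hfX] at hy
          have : X = y := by exact_mod_cast hy
          exact hXnot (this ▸ (hmem _).mp hyS)
        · intro s hsS hspos
          refine ⟨X + s, (hmem _).mpr (pfA hr1 hr2 hr3 hr4 ((hmem _).mp hsS) hspos), ?_⟩
          rw [hfX]; push_cast; ring
  rw [hset, Set.ncard_coe_finset, Finset.card_image_of_injOn, Finset.card_range]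
  · omega
  · intro i hi j hj he
    simp only [Finset.mem_coe, Finset.mem_range] at hi hj
    rw [hf] at he
    simp only at he
    by_cases hib : i ≤ m <;> by_cases hjb : j ≤ m
    · rw [if_pos hib, if_pos hjb] at he
      have : (i : ℤ) = j := by linarith
      exact_mod_cast this
    · exfalso
      rw [if_pos hib, if_neg hjb] at he
      have h1 : (0 : ℤ) ≤ (j : ℤ) - (m + 1) := by
        have : m + 1 ≤ j := by omega
        omega
      have h2 : ((h : ℤ) + 1) * ((j : ℤ) - (m + 1)) ≥ 0 := by positivity
      have h3 : (i : ℤ) ≤ m := by exact_mod_cast hib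
      have hhc : (h : ℤ) = m + 2 := by push_cast [hhdef]; ring
      nlinarith
    · exfalso
      rw [if_neg hib, if_pos hjb] at he
      have h1 : (0 : ℤ) ≤ (i : ℤ) - (m + 1) := by
        have : m + 1 ≤ i := by omega
        omega
      have h2 : ((h : ℤ) + 1) * ((i : ℤ) - (m + 1)) ≥ 0 := by positivity
      have h3 : (j : ℤ) ≤ m := by exact_mod_cast hjb
      have hhc : (h : ℤ) = m + 2 := by push_cast [hhdef]; ring
      nlinarith
    · rw [if_neg hib, if_neg hjb] at he
      have he2 : ((h : ℤ) + 1) * ((i : ℤ) - (m + 1)) = ((h : ℤ) + 1) * ((j : ℤ) - (m + 1)) := by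
        linarith
      have := mul_left_cancel₀ (show ((h : ℤ) + 1) ≠ 0 by positivity) he2
      have : (i : ℤ) = j := by linarith
      exact_mod_cast this
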